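/- Let 0 denote the zero function on [0,∞). The iterates T^l(0) converge pointwise, as l → ∞, to a function q : [0,∞) → [0,1]; this limit q is a fixed point of T, and it is the smallest fixed point: for every function f : [0,∞) → [0,1] with T(f) = f one has q(x) ≤ f(x) for all x ≥ 0. -/

import Mathlib

open MeasureTheory Real Set Filter

noncomputable def Toper (P : ℕ → ℝ) (f : ℝ → ℝ) : ℝ → ℝ := fun x =>
  if x = 0 then
    ∑' k : ℕ, P (k + 1) * ∫ z in Ioi (0 : ℝ),
      Real.exp (-z) * z ^ k / (Nat.factorial k : ℝ) * f z ^ k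
  else
    (1 / x) * ∑' k : ℕ, P (k + 1) *
      ∫ y in Ioc (0 : ℝ) x,
        ((∫ z in Ioc (0 : ℝ) y, Real.exp (-z) * z ^ k / (Nat.factorial k : ℝ)) +
          ∫ z in Ioi y, Real.exp (-z) * z ^ k / (Nat.factorial k : ℝ) * f z ^ k)


noncomputable def gk (k : ℕ) (z : ℝ) : ℝ := Real.exp (-z) * z ^ k / (Nat.factorial k : ℝ)

lemma gk_nonneg (k : ℕ) {z : ℝ} (hz : 0 ≤ z) : 0 ≤ gk k z := by
  unfold gk
  positivity

lemma gk_integrableOn (k : ℕ) : IntegrableOn (gk k) (Ioi 0) := by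
  have h := Real.GammaIntegral_convergent (s := (k:ℝ) + 1) (by positivity)
  have : IntegrableOn (fun z : ℝ => Real.exp (-z) * z ^ k) (Ioi 0) := by
    refine h.congr_fun ?_ measurableSet_Ioi
    intro x hx
    simp only [add_sub_cancel_right]
    rw [Real.rpow_natCast]
  unfold gk
  simp only [div_eq_mul_inv]
  exact this.mul_const ((Nat.factorial k : ℝ))⁻¹

lemma gk_integral (k : ℕ) : ∫ z in Ioi (0:ℝ), gk k z = 1 := by
  have h := Real.Gamma_eq_integral (s := (k:ℝ) + 1) (by positivity)
  rw [Real.Gamma_nat_eq_factorial] at h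
  have h2 : ∫ x in Ioi (0:ℝ), Real.exp (-x) * x ^ ((k:ℝ) + 1 - 1) = ∫ x in Ioi (0:ℝ), Real.exp (-x) * x ^ k := by
    refine setIntegral_congr_fun measurableSet_Ioi (fun x hx => ?_)
    simp only [add_sub_cancel_right]
    rw [Real.rpow_natCast]
  rw [h2] at h
  unfold gk
  rw [integral_div, ← h, div_self (by exact_mod_cast (Nat.factorial_pos k).ne')]


lemma gk_measurable (k : ℕ) : Measurable (gk k) :=
  ((Real.measurable_exp.comp measurable_neg).mul (measurable_id.pow_const k)).div_const _

def Good (f : ℝ → ℝ) : Prop := ∀ z, 0 < z → f z ∈ Icc (0:ℝ) 1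

noncomputable def hfun (f : ℝ → ℝ) (k : ℕ) (y : ℝ) : ℝ :=
  (∫ z in Ioc (0:ℝ) y, gk k z) + ∫ z in Ioi y, gk k z * f z ^ k
noncomputable def J (f : ℝ → ℝ) (k : ℕ) (x : ℝ) : ℝ := ∫ y in Ioc (0:ℝ) x, hfun f k y
noncomputable def Ck (f : ℝ → ℝ) (k : ℕ) : ℝ := ∫ z in Ioi (0:ℝ), gk k z * f z ^ k

lemma integral_split {H : ℝ → ℝ} (hH : IntegrableOn H (Ioi 0)) {y : ℝ} (hy : 0 ≤ y) :
    ∫ z in Ioi (0:ℝ), H z = (∫ z in Ioc (0:ℝ) y, H z) + ∫ z in Ioi y, H z := by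
  rw [← Ioc_union_Ioi_eq_Ioi hy, setIntegral_union (Ioc_disjoint_Ioi le_rfl) measurableSet_Ioi
    (hH.mono_set (by rw [← Ioc_union_Ioi_eq_Ioi hy]; exact subset_union_left))
    (hH.mono_set (by rw [← Ioc_union_Ioi_eq_Ioi hy]; exact subset_union_right))]

lemma Hmeas {f : ℝ → ℝ} (hf : Measurable f) (k : ℕ) : Measurable (fun z => gk k z * f z ^ k) :=
  (gk_measurable k).mul (hf.pow_const k)

lemma H_le {f : ℝ → ℝ} (hfg : Good f) (k : ℕ) :
    ∀ z ∈ Ioi (0:ℝ), 0 ≤ gk k z * f z ^ k ∧ gk k z * f z ^ k ≤ gk k z := by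
  intro z hz
  obtain ⟨h1, h2⟩ := hfg z hz
  have hg := gk_nonneg k (le_of_lt hz)
  exact ⟨mul_nonneg hg (pow_nonneg h1 k),
    by nlinarith [pow_le_one₀ h1 h2 (n := k), pow_nonneg h1 k]⟩

lemma HintOn {f : ℝ → ℝ} (hf : Measurable f) (hfg : Good f) (k : ℕ) :
    IntegrableOn (fun z => gk k z * f z ^ k) (Ioi 0) := by
  refine (gk_integrableOn k).mono' (Hmeas hf k).aestronglyMeasurable ?_
  filter_upwards [ae_restrict_mem measurableSet_Ioi] with z hz
  rcases H_le hfg k z hz with ⟨h1, h2⟩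
  rw [Real.norm_eq_abs, abs_of_nonneg h1]; exact h2

lemma HintOn' {f : ℝ → ℝ} (hf : Measurable f) (hfg : Good f) (k : ℕ) {y : ℝ} (hy : 0 ≤ y) :
    IntegrableOn (fun z => gk k z * f z ^ k) (Ioi y) :=
  (HintOn hf hfg k).mono_set (Ioi_subset_Ioi hy)

lemma B_nonneg {f : ℝ → ℝ} (hfg : Good f) (k : ℕ) {y : ℝ} (hy : 0 ≤ y) :
    0 ≤ ∫ z in Ioi y, gk k z * f z ^ k :=
  setIntegral_nonneg measurableSet_Ioi (fun z hz => (H_le hfg k z (lt_of_le_of_lt hy hz)).1)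

lemma B_le {f : ℝ → ℝ} (hf : Measurable f) (hfg : Good f) (k : ℕ) {y : ℝ} (hy : 0 ≤ y) :
    (∫ z in Ioi y, gk k z * f z ^ k) ≤ ∫ z in Ioi y, gk k z :=
  setIntegral_mono_on (HintOn' hf hfg k hy) ((gk_integrableOn k).mono_set (Ioi_subset_Ioi hy))
    measurableSet_Ioi (fun z hz => (H_le hfg k z (lt_of_le_of_lt hy hz)).2)

lemma A_nonneg (k : ℕ) (y : ℝ) : 0 ≤ ∫ z in Ioc (0:ℝ) y, gk k z :=
  setIntegral_nonneg measurableSet_Ioc (fun z hz => gk_nonneg k hz.1.le)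

lemma gk_Ioi_le (k : ℕ) {y : ℝ} (hy : 0 ≤ y) : (∫ z in Ioi y, gk k z) ≤ 1 := by
  rw [← gk_integral k, integral_split (gk_integrableOn k) hy]
  have := A_nonneg k y
  linarith

lemma h_mem {f : ℝ → ℝ} (hf : Measurable f) (hfg : Good f) (k : ℕ) {y : ℝ} (hy : 0 ≤ y) :
    hfun f k y ∈ Icc (0:ℝ) 1 := by
  unfold hfun
  have hA0 := A_nonneg k y
  have hB0 := B_nonneg hfg k hy
  have hB1 := B_le hf hfg k hy
  have h1 : (∫ z in Ioc (0:ℝ) y, gk k z) + ∫ z in Ioi y, gk k z ≤ 1 := by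
    rw [← integral_split (gk_integrableOn k) hy, gk_integral k]
  exact ⟨by linarith, by linarith⟩


noncomputable def Phi (G : ℝ → ℝ) (y : ℝ) : ℝ := ∫ z in Ioc (0:ℝ) y, G z

lemma Phi_mono {G : ℝ → ℝ} (hG : IntegrableOn G (Ioi 0))
    (hG0 : ∀ z, 0 < z → 0 ≤ G z) : Monotone (Phi G) := by
  intro y y' hyy
  apply setIntegral_mono_set (hG.mono_set Ioc_subset_Ioi_self)
  · filter_upwards [ae_restrict_mem measurableSet_Ioc] with z hz using hG0 z hz.1
  · exact HasSubset.Subset.eventuallyLE (Ioc_subset_Ioc_right hyy)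

lemma B_eq_sub {H : ℝ → ℝ} (hH : IntegrableOn H (Ioi 0)) {y : ℝ} (hy : 0 ≤ y) :
    ∫ z in Ioi y, H z = (∫ z in Ioi (0:ℝ), H z) - Phi H y := by
  rw [integral_split hH hy]; unfold Phi; ring


lemma hfun_eq {f : ℝ → ℝ} (hf : Measurable f) (hfg : Good f) (k : ℕ) {y : ℝ} (hy : 0 ≤ y) :
    hfun f k y = Phi (gk k) y + ((∫ z in Ioi (0:ℝ), gk k z * f z ^ k)
      - Phi (fun z => gk k z * f z ^ k) y) := by
  unfold hfun Phi
  rw [B_eq_sub (HintOn hf hfg k) hy]; rfl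

lemma hfun_meas_aux {f : ℝ → ℝ} (hf : Measurable f) (hfg : Good f) (k : ℕ) :
    Measurable (fun y => Phi (gk k) y + ((∫ z in Ioi (0:ℝ), gk k z * f z ^ k)
      - Phi (fun z => gk k z * f z ^ k) y)) := by
  have h1 : Measurable (Phi (gk k)) :=
    (Phi_mono (gk_integrableOn k) (fun z hz => gk_nonneg k hz.le)).measurable
  have h2 : Measurable (Phi (fun z => gk k z * f z ^ k)) := by
    refine (Phi_mono (HintOn hf hfg k) ?_).measurable
    intro z hz
    exact mul_nonneg (gk_nonneg k hz.le) (pow_nonneg (hfg z hz).1 k)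
  exact h1.add (measurable_const.sub h2)

lemma hfun_integrableOn {f : ℝ → ℝ} (hf : Measurable f) (hfg : Good f) (k : ℕ) (x : ℝ) :
    IntegrableOn (hfun f k) (Ioc 0 x) := by
  have heq : EqOn (hfun f k) (fun y => Phi (gk k) y + ((∫ z in Ioi (0:ℝ), gk k z * f z ^ k)
      - Phi (fun z => gk k z * f z ^ k) y)) (Ioc 0 x) :=
    fun y hy => hfun_eq hf hfg k hy.1.le
  rw [integrableOn_congr_fun heq measurableSet_Ioc]
  refine Integrable.mono' (g := fun _ => (1:ℝ)) ?_ ((hfun_meas_aux hf hfg k).aestronglyMeasurable) ?_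
  · exact integrableOn_const (by rw [Real.volume_Ioc]; exact ENNReal.ofReal_ne_top)
  · filter_upwards [ae_restrict_mem measurableSet_Ioc] with y hy
    rw [← hfun_eq hf hfg k hy.1.le]
    have := h_mem hf hfg k hy.1.le
    rw [Real.norm_eq_abs, abs_le]
    exact ⟨by linarith [this.1], this.2⟩


lemma J_nonneg {f : ℝ → ℝ} (hf : Measurable f) (hfg : Good f) (k : ℕ) (x : ℝ) :
    0 ≤ J f k x :=
  setIntegral_nonneg measurableSet_Ioc (fun y hy => (h_mem hf hfg k hy.1.le).1)

lemma J_le {f : ℝ → ℝ} (hf : Measurable f) (hfg : Good f) (k : ℕ) {x : ℝ} (hx : 0 ≤ x) :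
    J f k x ≤ x := by
  have : J f k x ≤ ∫ _ in Ioc (0:ℝ) x, (1:ℝ) := by
    refine setIntegral_mono_on (hfun_integrableOn hf hfg k x) ?_ measurableSet_Ioc
      (fun y hy => (h_mem hf hfg k hy.1.le).2)
    exact integrableOn_const (by rw [Real.volume_Ioc]; exact ENNReal.ofReal_ne_top)
  rw [setIntegral_const, measureReal_def, Real.volume_Ioc, smul_eq_mul, mul_one,
    ENNReal.toReal_ofReal (by linarith)] at this
  simpa using this

lemma J_zero {f : ℝ → ℝ} (k : ℕ) {x : ℝ} (hx : x ≤ 0) : J f k x = 0 := by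
  unfold J
  rw [Ioc_eq_empty (by exact not_lt.2 hx), Measure.restrict_empty, integral_zero_measure]

lemma J_mono_x {f : ℝ → ℝ} (hf : Measurable f) (hfg : Good f) (k : ℕ) :
    Monotone (J f k) := by
  intro x x' hxx
  apply setIntegral_mono_set (hfun_integrableOn hf hfg k x')
  · filter_upwards [ae_restrict_mem measurableSet_Ioc] with y hy using (h_mem hf hfg k hy.1.le).1
  · exact HasSubset.Subset.eventuallyLE (Ioc_subset_Ioc_right hxx)

section
variable {P : ℕ → ℝ}

lemma Psummable (hPsum : ∑' k, P k = 1) : Summable P := by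
  by_contra h
  rw [tsum_eq_zero_of_not_summable h] at hPsum
  norm_num at hPsum

lemma P1summable (hPsum : ∑' k, P k = 1) : Summable (fun k => P (k + 1)) :=
  (summable_nat_add_iff 1).2 (Psummable hPsum)

lemma tsumP1 (hP0 : P 0 = 0) (hPsum : ∑' k, P k = 1) : ∑' k, P (k + 1) = 1 := by
  have := Summable.tsum_eq_zero_add (Psummable hPsum)
  rw [hPsum, hP0] at this
  linarith

-- rewriting Toper in terms of J / Ck
lemma Toper_eq_zero (P : ℕ → ℝ) (f : ℝ → ℝ) : Toper P f 0 = ∑' k, P (k + 1) * Ck f k := by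
  unfold Toper; rw [if_pos rfl]; rfl

lemma Toper_eq_pos (P : ℕ → ℝ) (f : ℝ → ℝ) {x : ℝ} (hx : x ≠ 0) :
    Toper P f x = (1 / x) * ∑' k, P (k + 1) * J f k x := by
  unfold Toper
  rw [if_neg hx]
  rfl

lemma Ck_mem {f : ℝ → ℝ} (hf : Measurable f) (hfg : Good f) (k : ℕ) :
    Ck f k ∈ Icc (0:ℝ) 1 :=
  ⟨B_nonneg hfg k le_rfl, le_trans (B_le hf hfg k le_rfl) (gk_Ioi_le k le_rfl)⟩

variable (hP0 : P 0 = 0) (hPnonneg : ∀ k, 0 ≤ P k) (hPsum : ∑' k, P k = 1)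

lemma summable_term0 (hPnonneg : ∀ k, 0 ≤ P k) (hPsum : ∑' k, P k = 1)
    {f : ℝ → ℝ} (hf : Measurable f) (hfg : Good f) :
    Summable (fun k => P (k + 1) * Ck f k) := by
  refine Summable.of_nonneg_of_le
    (fun k => mul_nonneg (hPnonneg _) (Ck_mem hf hfg k).1)
    (fun k => mul_le_of_le_one_right (hPnonneg _) (Ck_mem hf hfg k).2)
    (P1summable hPsum)

lemma summable_term (hPnonneg : ∀ k, 0 ≤ P k) (hPsum : ∑' k, P k = 1)
    {f : ℝ → ℝ} (hf : Measurable f) (hfg : Good f) (x : ℝ) :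
    Summable (fun k => P (k + 1) * J f k x) := by
  rcases le_or_gt x 0 with hx | hx
  · have : (fun k => P (k + 1) * J f k x) = fun _ => (0:ℝ) := by
      funext k; rw [J_zero k hx, mul_zero]
    rw [this]; exact summable_zero
  · refine Summable.of_nonneg_of_le
      (fun k => mul_nonneg (hPnonneg _) (J_nonneg hf hfg k x))
      (fun k => mul_le_mul_of_nonneg_left (J_le hf hfg k hx.le) (hPnonneg _)) ?_
    exact (P1summable hPsum).mul_right x

lemma Toper_mem (hP0 : P 0 = 0) (hPnonneg : ∀ k, 0 ≤ P k) (hPsum : ∑' k, P k = 1)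
    {f : ℝ → ℝ} (hf : Measurable f) (hfg : Good f) {x : ℝ} (hx : 0 ≤ x) :
    Toper P f x ∈ Icc (0:ℝ) 1 := by
  rcases eq_or_lt_of_le hx with hx0 | hx0
  · rw [← hx0, Toper_eq_zero]
    constructor
    · exact tsum_nonneg (fun k => mul_nonneg (hPnonneg _) (Ck_mem hf hfg k).1)
    · calc ∑' k, P (k + 1) * Ck f k ≤ ∑' k, P (k + 1) :=
            Summable.tsum_le_tsum (fun k => mul_le_of_le_one_right (hPnonneg _) (Ck_mem hf hfg k).2)
              (summable_term0 hPnonneg hPsum hf hfg) (P1summable hPsum)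
        _ = 1 := tsumP1 hP0 hPsum
  · rw [Toper_eq_pos P f hx0.ne']
    constructor
    · exact mul_nonneg (by positivity)
        (tsum_nonneg (fun k => mul_nonneg (hPnonneg _) (J_nonneg hf hfg k x)))
    · have hS : ∑' k, P (k + 1) * J f k x ≤ ∑' k, P (k + 1) * x := by
        refine Summable.tsum_le_tsum
          (fun k => mul_le_mul_of_nonneg_left (J_le hf hfg k hx) (hPnonneg _))
          (summable_term hPnonneg hPsum hf hfg x) ((P1summable hPsum).mul_right x)
      rw [tsum_mul_right, tsumP1 hP0 hPsum, one_mul] at hS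
      rw [one_div]
      calc x⁻¹ * ∑' k, P (k + 1) * J f k x ≤ x⁻¹ * x :=
            mul_le_mul_of_nonneg_left hS (by positivity)
        _ = 1 := inv_mul_cancel₀ hx0.ne'

end

section
variable {P : ℕ → ℝ}

lemma S_mono (hPnonneg : ∀ k, 0 ≤ P k) (hPsum : ∑' k, P k = 1)
    {f : ℝ → ℝ} (hf : Measurable f) (hfg : Good f) :
    Monotone (fun x => ∑' k, P (k + 1) * J f k x) := by
  intro x x' hxx
  exact Summable.tsum_le_tsum
    (fun k => mul_le_mul_of_nonneg_left (J_mono_x hf hfg k hxx) (hPnonneg _))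
    (summable_term hPnonneg hPsum hf hfg x) (summable_term hPnonneg hPsum hf hfg x')

lemma Toper_measurable (hPnonneg : ∀ k, 0 ≤ P k) (hPsum : ∑' k, P k = 1)
    {f : ℝ → ℝ} (hf : Measurable f) (hfg : Good f) :
    Measurable (Toper P f) := by
  have hS : Measurable (fun x => ∑' k, P (k + 1) * J f k x) :=
    (S_mono hPnonneg hPsum hf hfg).measurable
  have : Toper P f = fun x => if x = 0 then ∑' k, P (k + 1) * Ck f k
      else (1 / x) * ∑' k, P (k + 1) * J f k x := by
    funext x
    by_cases hx : x = 0
    · rw [hx, if_pos rfl, Toper_eq_zero]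
    · rw [if_neg hx, Toper_eq_pos P f hx]
  rw [this]
  refine Measurable.ite ?_ measurable_const ((measurable_const.div measurable_id).mul hS)
  simp only [Set.setOf_eq_eq_singleton]
  exact MeasurableSet.singleton 0

lemma Toper_mono (hPnonneg : ∀ k, 0 ≤ P k) (hPsum : ∑' k, P k = 1)
    {f g : ℝ → ℝ} (hf : Measurable f) (hfg : Good f) (hg : Measurable g) (hgg : Good g)
    (hle : ∀ z, 0 < z → f z ≤ g z) {x : ℝ} (hx : 0 ≤ x) :
    Toper P f x ≤ Toper P g x := by
  have hpow : ∀ k, ∀ z, 0 < z → f z ^ k ≤ g z ^ k := fun k z hz =>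
    pow_le_pow_left₀ (hfg z hz).1 (hle z hz) k
  have hCk : ∀ k, Ck f k ≤ Ck g k := by
    intro k
    refine setIntegral_mono_on (HintOn hf hfg k) (HintOn hg hgg k) measurableSet_Ioi
      (fun z hz => mul_le_mul_of_nonneg_left (hpow k z hz) (gk_nonneg k (le_of_lt hz)))
  have hB : ∀ k, ∀ y : ℝ, 0 < y →
      (∫ z in Ioi y, gk k z * f z ^ k) ≤ ∫ z in Ioi y, gk k z * g z ^ k := by
    intro k y hy
    refine setIntegral_mono_on (HintOn' hf hfg k hy.le) (HintOn' hg hgg k hy.le)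
      measurableSet_Ioi (fun z hz => mul_le_mul_of_nonneg_left
        (hpow k z (lt_trans hy hz)) (gk_nonneg k (le_of_lt (lt_trans hy hz))))
  have hJ : ∀ k, J f k x ≤ J g k x := by
    intro k
    refine setIntegral_mono_on (hfun_integrableOn hf hfg k x) (hfun_integrableOn hg hgg k x)
      measurableSet_Ioc (fun y hy => ?_)
    exact add_le_add le_rfl (hB k y hy.1)
  rcases eq_or_lt_of_le hx with hx0 | hx0
  · rw [← hx0, Toper_eq_zero, Toper_eq_zero]
    exact Summable.tsum_le_tsum (fun k => mul_le_mul_of_nonneg_left (hCk k) (hPnonneg _))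
      (summable_term0 hPnonneg hPsum hf hfg) (summable_term0 hPnonneg hPsum hg hgg)
  · rw [Toper_eq_pos P f hx0.ne', Toper_eq_pos P g hx0.ne']
    refine mul_le_mul_of_nonneg_left ?_ (by positivity)
    exact Summable.tsum_le_tsum (fun k => mul_le_mul_of_nonneg_left (hJ k) (hPnonneg _))
      (summable_term hPnonneg hPsum hf hfg x) (summable_term hPnonneg hPsum hg hgg x)

end

theorem stmt_3 (P : ℕ → ℝ)
    (hP0 : P 0 = 0) (hPnonneg : ∀ k, 0 ≤ P k) (hPsum : ∑' k, P k = 1)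
    (hPmean : Summable fun k : ℕ => (k : ℝ) * P k) (hP1 : P 1 < 1) :
    ∃ q : ℝ → ℝ,
      (∀ x, 0 ≤ x → q x ∈ Icc (0 : ℝ) 1) ∧
      (∀ x, 0 ≤ x →
        Tendsto (fun l => (Toper P)^[l] (fun _ => 0) x) atTop (nhds (q x))) ∧
      (∀ x, 0 ≤ x → Toper P q x = q x) ∧
      (∀ f : ℝ → ℝ, Measurable f → (∀ x, 0 ≤ x → f x ∈ Icc (0 : ℝ) 1) →
        (∀ x, 0 ≤ x → Toper P f x = f x) → ∀ x, 0 ≤ x → q x ≤ f x) := by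
  set fl : ℕ → ℝ → ℝ := fun l => (Toper P)^[l] (fun _ => 0) with hfl
  -- basic facts about the iterates
  have hfl_succ : ∀ l, fl (l + 1) = Toper P (fl l) := fun l =>
    Function.iterate_succ_apply' (Toper P) l _
  have key : ∀ l, Measurable (fl l) ∧ Good (fl l) := by
    intro l
    induction l with
    | zero => exact ⟨measurable_const, fun z hz => ⟨le_rfl, zero_le_one⟩⟩
    | succ n ih =>
      rw [hfl_succ]
      exact ⟨Toper_measurable hPnonneg hPsum ih.1 ih.2,
        fun z hz => Toper_mem hP0 hPnonneg hPsum ih.1 ih.2 hz.le⟩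
  have hmeas : ∀ l, Measurable (fl l) := fun l => (key l).1
  have hgood : ∀ l, Good (fl l) := fun l => (key l).2
  have hmem : ∀ l, ∀ x, 0 ≤ x → fl l x ∈ Icc (0:ℝ) 1 := by
    intro l
    cases l with
    | zero => exact fun x _ => ⟨le_rfl, zero_le_one⟩
    | succ n => rw [hfl_succ]; exact fun x hx => Toper_mem hP0 hPnonneg hPsum (hmeas n) (hgood n) hx
  -- monotone in l
  have hstep : ∀ l, ∀ x, 0 ≤ x → fl l x ≤ fl (l + 1) x := by
    intro l
    induction l with
    | zero => intro x hx; exact (hmem 1 x hx).1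
    | succ n ih =>
      intro x hx
      rw [hfl_succ, hfl_succ]
      exact Toper_mono hPnonneg hPsum (hmeas n) (hgood n) (hmeas (n+1)) (hgood (n+1))
        (fun z hz => ih z hz.le) hx
  have hmono : ∀ x, 0 ≤ x → Monotone (fun l => fl l x) := fun x hx =>
    monotone_nat_of_le_succ (fun l => hstep l x hx)
  have hbdd : ∀ x, 0 ≤ x → BddAbove (Set.range (fun l => fl l x)) := by
    intro x hx
    exact ⟨1, by rintro _ ⟨l, rfl⟩; exact (hmem l x hx).2⟩
  -- the limit
  set q : ℝ → ℝ := fun x => ⨆ l, fl l x with hq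
  have hflneg : ∀ l, ∀ x : ℝ, x < 0 → fl l x = 0 := by
    intro l
    cases l with
    | zero => intro x _; rfl
    | succ n =>
      intro x hx
      rw [hfl_succ, Toper_eq_pos P _ hx.ne]
      have : (fun k => P (k + 1) * J (fl n) k x) = fun _ => (0:ℝ) := by
        funext k; rw [J_zero k hx.le, mul_zero]
      rw [this, tsum_zero, mul_zero]
  have htends : ∀ x, Tendsto (fun l => fl l x) atTop (nhds (q x)) := by
    intro x
    rcases lt_or_ge x 0 with hx | hx
    · have h1 : (fun l => fl l x) = fun _ : ℕ => (0:ℝ) := funext fun l => hflneg l x hx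
      have h2 : q x = 0 := by
        show (⨆ l, fl l x) = 0
        rw [show (⨆ l, fl l x) = ⨆ l : ℕ, (0:ℝ) from by rw [← h1], ciSup_const]
      rw [h2, h1]
      exact tendsto_const_nhds
    · exact tendsto_atTop_ciSup (hmono x hx) (hbdd x hx)
  have hq_mem : ∀ x, 0 ≤ x → q x ∈ Icc (0:ℝ) 1 := by
    intro x hx
    constructor
    · exact le_trans (hmem 0 x hx).1 (le_ciSup (hbdd x hx) 0)
    · exact ciSup_le (fun l => (hmem l x hx).2)
  have hq_meas : Measurable q := by
    refine measurable_of_tendsto_metrizable hmeas (tendsto_pi_nhds.2 htends)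
  have hq_good : Good q := fun z hz => hq_mem z hz.le
  -- convergence of each layer
  have hpow_t : ∀ k, ∀ z : ℝ, 0 < z →
      Tendsto (fun l => fl l z ^ k) atTop (nhds (q z ^ k)) :=
    fun k z hz => (htends z).pow k
  have hB_t : ∀ k, ∀ y : ℝ, 0 < y →
      Tendsto (fun l => ∫ z in Ioi y, gk k z * fl l z ^ k) atTop
        (nhds (∫ z in Ioi y, gk k z * q z ^ k)) := by
    intro k y hy
    refine tendsto_integral_of_dominated_convergence (gk k)
      (fun l => ((Hmeas (hmeas l) k).aestronglyMeasurable).restrict) 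
      ((gk_integrableOn k).mono_set (Ioi_subset_Ioi hy.le)) ?_ ?_
    · intro l
      filter_upwards [ae_restrict_mem measurableSet_Ioi] with z hz
      obtain ⟨h1, h2⟩ := H_le (hgood l) k z (lt_trans hy hz)
      rw [Real.norm_eq_abs, abs_of_nonneg h1]; exact h2
    · filter_upwards [ae_restrict_mem measurableSet_Ioi] with z hz
      exact Tendsto.const_mul _ (hpow_t k z (lt_trans hy hz))
  have hhfun_t : ∀ k, ∀ y : ℝ, 0 < y →
      Tendsto (fun l => hfun (fl l) k y) atTop (nhds (hfun q k y)) := by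
    intro k y hy
    exact Tendsto.const_add _ (hB_t k y hy)
  have hJ_t : ∀ k, ∀ x : ℝ, 0 < x →
      Tendsto (fun l => J (fl l) k x) atTop (nhds (J q k x)) := by
    intro k x hx
    refine tendsto_integral_of_dominated_convergence (fun _ => (1:ℝ))
      (fun l => (hfun_integrableOn (hmeas l) (hgood l) k x).aestronglyMeasurable) ?_ ?_ ?_
    · exact integrableOn_const (by rw [Real.volume_Ioc]; exact ENNReal.ofReal_ne_top)
    · intro l
      filter_upwards [ae_restrict_mem measurableSet_Ioc] with y hy
      obtain ⟨h1, h2⟩ := h_mem (hmeas l) (hgood l) k (le_of_lt hy.1)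
      rw [Real.norm_eq_abs, abs_of_nonneg h1]; exact h2
    · filter_upwards [ae_restrict_mem measurableSet_Ioc] with y hy
      exact hhfun_t k y hy.1
  have hCk_t : ∀ k, Tendsto (fun l => Ck (fl l) k) atTop (nhds (Ck q k)) := by
    intro k
    refine tendsto_integral_of_dominated_convergence (gk k)
      (fun l => ((Hmeas (hmeas l) k).aestronglyMeasurable).restrict)
      (gk_integrableOn k) ?_ ?_
    · intro l
      filter_upwards [ae_restrict_mem measurableSet_Ioi] with z hz
      obtain ⟨h1, h2⟩ := H_le (hgood l) k z hz
      rw [Real.norm_eq_abs, abs_of_nonneg h1]; exact h2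
    · filter_upwards [ae_restrict_mem measurableSet_Ioi] with z hz
      exact Tendsto.const_mul _ (hpow_t k z hz)
  -- fixed point
  have hfix : ∀ x, 0 ≤ x → Toper P q x = q x := by
    intro x hx
    have hiter : Tendsto (fun l => fl (l + 1) x) atTop (nhds (q x)) :=
      (htends x).comp (tendsto_add_atTop_nat 1)
    have hiter' : Tendsto (fun l => Toper P (fl l) x) atTop (nhds (q x)) := by
      have : (fun l => Toper P (fl l) x) = fun l => fl (l + 1) x := by
        funext l; rw [hfl_succ]
      rw [this]; exact hiter
    rcases eq_or_lt_of_le hx with hx0 | hx0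
    · -- x = 0
      have hT : Tendsto (fun l => Toper P (fl l) 0) atTop (nhds (Toper P q 0)) := by
        rw [Toper_eq_zero]
        have : ∀ l, Toper P (fl l) 0 = ∑' k, P (k + 1) * Ck (fl l) k :=
          fun l => Toper_eq_zero P (fl l)
        simp only [this]
        refine tendsto_tsum_of_dominated_convergence (P1summable hPsum)
          (fun k => (hCk_t k).const_mul _) ?_
        filter_upwards with l k
        rw [Real.norm_eq_abs, abs_mul, abs_of_nonneg (hPnonneg _),
          abs_of_nonneg (Ck_mem (hmeas l) (hgood l) k).1]
        exact mul_le_of_le_one_right (hPnonneg _) (Ck_mem (hmeas l) (hgood l) k).2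
      rw [← hx0] at hiter' ⊢
      exact tendsto_nhds_unique hT hiter'
    · -- x > 0
      have hT : Tendsto (fun l => Toper P (fl l) x) atTop (nhds (Toper P q x)) := by
        rw [Toper_eq_pos P q hx0.ne']
        have heq : ∀ l, Toper P (fl l) x = (1 / x) * ∑' k, P (k + 1) * J (fl l) k x :=
          fun l => Toper_eq_pos P (fl l) hx0.ne'
        simp only [heq]
        refine Tendsto.const_mul _ ?_
        refine tendsto_tsum_of_dominated_convergence
          ((P1summable hPsum).mul_right x) (fun k => (hJ_t k x hx0).const_mul _) ?_
        filter_upwards with l k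
        rw [Real.norm_eq_abs, abs_mul, abs_of_nonneg (hPnonneg _),
          abs_of_nonneg (J_nonneg (hmeas l) (hgood l) k x)]
        exact mul_le_mul_of_nonneg_left (J_le (hmeas l) (hgood l) k hx) (hPnonneg _)
      exact tendsto_nhds_unique hT hiter'
  -- minimality
  refine ⟨q, hq_mem, fun x hx => htends x, hfix, ?_⟩
  intro f hf hfmem hffix x hx
  have hfgood : Good f := fun z hz => hfmem z hz.le
  have hle : ∀ l, ∀ x, 0 ≤ x → fl l x ≤ f x := by
    intro l
    induction l with
    | zero => exact fun x hx => (hfmem x hx).1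
    | succ n ih =>
      intro x hx
      rw [hfl_succ, ← hffix x hx]
      exact Toper_mono hPnonneg hPsum (hmeas n) (hgood n) hf hfgood
        (fun z hz => ih z hz.le) hx
  exact ciSup_le (fun l => hle l x hx)
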